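/- Suppose r > 1 rooms, each with a finite set of switch configurations, and the initial configurations are unknown to the prisoners. Then for every deterministic prisoners' strategy there exist initial room configurations and a valid schedule (one sending every prisoner to every room infinitely often) under which the prisoners either declare before every prisoner has visited every room, or never declare at all. Hence no winning strategy exists. -/

import Mathlib

/-- A prisoner's observation history: the list of (configuration seen on entry,
configuration left on exit) for each of his visits so far. -/
abbrev Hist (C : Type) := List (C × C)

/-- A deterministic strategy: for each prisoner, a function from his history
and the configuration of the room he enters to the configuration he leaves the
room in, together with whether he declares. -/
abbrev Strategy (n : ℕ) (C : Type) := Fin n → Hist C → C → C × Bool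

/-- A schedule: who visits which room at each step. -/
abbrev Schedule (n r : ℕ) := ℕ → Fin n × Fin r

/-- Global state of an execution. -/
structure PState (n r : ℕ) (C : Type) where
  rooms : Fin r → C
  hist : Fin n → Hist C
  declared : Bool

/-- One visit of prisoner `v.1` to room `v.2`. -/
def pstep {n r : ℕ} {C : Type} (σ : Strategy n C) (v : Fin n × Fin r)
    (s : PState n r C) : PState n r C :=
  let cur := s.rooms v.2
  let a := σ v.1 (s.hist v.1) cur
  { rooms := Function.update s.rooms v.2 a.1
    hist := Function.update s.hist v.1 (s.hist v.1 ++ [(cur, a.1)])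
    declared := s.declared || a.2 }

/-- The state after `t` visits, starting from initial room configurations `init`. -/
def prun {n r : ℕ} {C : Type} (σ : Strategy n C) (sch : Schedule n r)
    (init : Fin r → C) : ℕ → PState n r C
  | 0 => ⟨init, fun _ => [], false⟩
  | t + 1 => pstep σ (sch t) (prun σ sch init t)

/-- A schedule is valid if every prisoner visits every room infinitely often. -/
def ValidSchedule {n r : ℕ} (sch : Schedule n r) : Prop :=
  ∀ (p : Fin n) (rm : Fin r), {t | sch t = (p, rm)}.Infinite

/-- Prisoner `p` has visited room `rm` within the first `t` visits. -/
def VisitedBy {n r : ℕ} (sch : Schedule n r) (t : ℕ) (p : Fin n) (rm : Fin r) : Prop :=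
  ∃ t' < t, sch t' = (p, rm)

/-- A strategy is winning for initial configurations `init` if under every
valid schedule some prisoner eventually declares, and every declaration occurs
only after each prisoner has visited every room at least once. -/
def Winning {n r : ℕ} {C : Type} (σ : Strategy n C) (init : Fin r → C) : Prop :=
  ∀ sch : Schedule n r, ValidSchedule sch →
    (∃ t, (prun σ sch init t).declared = true) ∧
    (∀ t, (prun σ sch init t).declared = true → ∀ p rm, VisitedBy sch t p rm)

/-- Two runs with schedules agreeing below `t` agree at time `t`. -/
theorem prun_congr {n r : ℕ} {C : Type} (σ : Strategy n C) (sch sch' : Schedule n r)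
    (init : Fin r → C) (t : ℕ) (h : ∀ s, s < t → sch s = sch' s) :
    prun σ sch init t = prun σ sch' init t := by
  induction t with
  | zero => rfl
  | succ t ih =>
    show pstep σ (sch t) (prun σ sch init t) = pstep σ (sch' t) (prun σ sch' init t)
    rw [h t (Nat.lt_succ_self t), ih (fun s hs => h s (hs.trans (Nat.lt_succ_self t)))]

/-- Theorem: no winning strategy with unknown starting
configurations. With `r > 1` rooms, each having a finite configuration set,
for every deterministic strategy there are initial configurations and a valid
schedule under which the prisoners either declare before everyone has visited
every room, or never declare at all. -/
theorem no_winning_strategy_unknown_start (n r : ℕ) (C : Type) [Finite C]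
    [Nonempty C] (hn : 0 < n) (hr : 1 < r) (σ : Strategy n C) :
    ∃ (init : Fin r → C) (sch : Schedule n r), ValidSchedule sch ∧
      ((∃ t, (prun σ sch init t).declared = true ∧
          ∃ (p : Fin n) (rm : Fin r), ¬ VisitedBy sch t p rm) ∨
        (∀ t, (prun σ sch init t).declared = false)) := by
  classical
  obtain ⟨c0⟩ := (inferInstance : Nonempty C)
  have hr0 : 0 < r := lt_trans one_pos hr
  set room0 : Fin r := ⟨0, hr0⟩ with hroom0def
  set sch0 : Schedule n r := fun t => (⟨t % n, Nat.mod_lt t hn⟩, room0) with hsch0def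
  set init0 : Fin r → C := fun _ => c0 with hinit0def
  by_cases hdec : ∀ t, (prun σ sch0 init0 t).declared = false
  case neg =>
    -- EARLY DECLARATION CASE
    push_neg at hdec
    obtain ⟨T, hT⟩ := hdec
    rw [Bool.ne_false_iff] at hT
    set sch1 : Schedule n r := fun t =>
      if t < T then sch0 t
      else (⟨t % n, Nat.mod_lt t hn⟩, ⟨(t / n) % r, Nat.mod_lt _ hr0⟩) with hsch1def
    refine ⟨init0, sch1, ?_, Or.inl ⟨T, ?_, ⟨0, hn⟩, ⟨1, hr⟩, ?_⟩⟩
    · -- validity of sch1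
      intro p j
      apply Set.infinite_of_forall_exists_gt
      intro N
      set k := N + T + 1 with hk
      set m := j.val + r * k with hm
      have hkm : k ≤ m := le_trans (Nat.le_mul_of_pos_left k hr0) (Nat.le_add_left _ _)
      have hmt : m ≤ p.val + n * m :=
        le_trans (Nat.le_mul_of_pos_left m hn) (Nat.le_add_left _ _)
      refine ⟨p.val + n * m, ?_, ?_⟩
      · show sch1 (p.val + n * m) = (p, j)
        have htT : ¬ (p.val + n * m < T) := by omega
        have h2 : (p.val + n * m) % n = p.val := by
          rw [Nat.add_mul_mod_self_left, Nat.mod_eq_of_lt p.isLt]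
        have h3 : (p.val + n * m) / n = m := by
          rw [Nat.add_mul_div_left _ _ hn, Nat.div_eq_of_lt p.isLt, Nat.zero_add]
        have h4 : m % r = j.val := by
          rw [hm, Nat.add_mul_mod_self_left, Nat.mod_eq_of_lt j.isLt]
        rw [hsch1def]
        simp only [if_neg htT]
        refine Prod.ext ?_ ?_
        · apply Fin.ext; exact h2
        · apply Fin.ext; rw [h3]; exact h4
      · omega
    · -- declared at T
      rw [prun_congr σ sch1 sch0 init0 T (fun s hs => by rw [hsch1def]; simp [if_pos hs])]
      exact hT
    · -- room 1 not visited before T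
      rintro ⟨t', ht', hsch⟩
      have h1 : (sch1 t').2 = (⟨1, hr⟩ : Fin r) := by rw [hsch]
      rw [hsch1def] at h1
      simp only [if_pos ht'] at h1
      have h2 : (0 : ℕ) = 1 := congrArg Fin.val h1
      exact absurd h2 (by norm_num)
  case pos =>
    -- NEVER DECLARE CASE
    set S : ℕ → PState n r C := prun σ sch0 init0 with hSdef
    set W : ℕ → C := fun t => (S (t + 1)).rooms room0 with hWdef
    obtain ⟨w, hw⟩ := Finite.exists_infinite_fiber W
    rw [Set.infinite_coe_iff] at hw
    have hex : ∀ m : ℕ, ∃ t, m < t ∧ W t = w := by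
      intro m
      obtain ⟨b, hb, hmb⟩ := hw.exists_gt m
      exact ⟨b, hmb, hb⟩
    choose f hf1 hf2 using hex
    set T : ℕ → ℕ := fun i => Nat.rec (f 0) (fun _ prev => f (prev + 2 * n)) i with hTdef
    have hTsucc : ∀ i, T (i + 1) = f (T i + 2 * n) := fun i => rfl
    have hTgap : ∀ i, T i + 2 * n < T (i + 1) := fun i => hf1 _
    have hTw : ∀ i, W (T i) = w := by
      intro i
      cases i with
      | zero => exact hf2 0
      | succ i => exact hf2 _
    have hTmono : StrictMono T := strictMono_nat_of_lt_succ (fun i => by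
      have := hTgap i; omega)
    have hTge : ∀ i, i ≤ T i := fun i => hTmono.le_apply
    set blk : ℕ → ℕ := fun t => sInf {i | t ≤ T i} with hblkdef
    have hblk_mem : ∀ t, t ≤ T (blk t) := by
      intro t
      have hne : {i | t ≤ T i}.Nonempty := ⟨t, hTge t⟩
      show blk t ∈ {i | t ≤ T i}
      exact Nat.sInf_mem hne
    have hblk_le : ∀ t i, t ≤ T i → blk t ≤ i := by
      intro t i h
      exact Nat.sInf_le (show i ∈ {i | t ≤ T i} from h)
    have hblk_mono : ∀ t, blk t ≤ blk (t + 1) :=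
      fun t => hblk_le t _ (le_trans (Nat.le_succ t) (hblk_mem (t + 1)))
    have hblk0 : blk 0 = 0 := Nat.le_zero.mp (hblk_le 0 0 (Nat.zero_le _))
    have hstep : ∀ t, (t < T (blk t) ∧ blk (t + 1) = blk t) ∨
        (t = T (blk t) ∧ blk (t + 1) = blk t + 1) := by
      intro t
      rcases lt_or_eq_of_le (hblk_mem t) with h | h
      · exact Or.inl ⟨h, le_antisymm (hblk_le _ _ h) (hblk_mono t)⟩
      · refine Or.inr ⟨h, ?_⟩
        have h1 : blk (t + 1) ≤ blk t + 1 := hblk_le _ _ (by have := hTgap (blk t); omega)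
        have h2 : blk t < blk (t + 1) := by
          rcases lt_or_eq_of_le (hblk_mono t) with h' | h'
          · exact h'
          · exfalso
            have h3 := hblk_mem (t + 1)
            rw [← h'] at h3
            omega
        omega
    set rho : ℕ → Fin r := fun t => ⟨blk t % r, Nat.mod_lt _ hr0⟩ with hrhodef
    set sch2 : Schedule n r := fun t => (⟨t % n, Nat.mod_lt t hn⟩, rho t) with hsch2def
    set init2 : Fin r → C := fun j => if j = room0 then c0 else w with hinit2def
    have hrho0 : rho 0 = room0 := by
      rw [hrhodef]; apply Fin.ext; simp [hblk0, hroom0def]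
    have key : ∀ t, (prun σ sch2 init2 t).hist = (S t).hist ∧
        (prun σ sch2 init2 t).declared = false ∧
        (prun σ sch2 init2 t).rooms (rho t) = (S t).rooms room0 ∧
        ∀ j, j ≠ rho t → (prun σ sch2 init2 t).rooms j = w := by
      intro t
      induction t with
      | zero =>
        refine ⟨rfl, rfl, ?_, ?_⟩
        · rw [hrho0]
          show init2 room0 = init0 room0
          rw [hinit2def, hinit0def]
          simp
        · intro j hj
          rw [hrho0] at hj
          show init2 j = w
          rw [hinit2def]
          simp [if_neg hj]
      | succ t ih =>
        obtain ⟨ihh, ihd, ihc, iho⟩ := ih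
        set a : C × Bool :=
          σ ⟨t % n, Nat.mod_lt t hn⟩ ((S t).hist ⟨t % n, Nat.mod_lt t hn⟩)
            ((S t).rooms room0) with hadef
        have hroomsS : (S (t + 1)).rooms = Function.update (S t).rooms room0 a.1 := by
          show (pstep σ (sch0 t) (S t)).rooms = _
          rw [hsch0def]
          simp only [pstep, hadef]
        have hhistS : (S (t + 1)).hist = Function.update (S t).hist ⟨t % n, Nat.mod_lt t hn⟩
            ((S t).hist ⟨t % n, Nat.mod_lt t hn⟩ ++ [((S t).rooms room0, a.1)]) := by
          show (pstep σ (sch0 t) (S t)).hist = _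
          rw [hsch0def]
          simp only [pstep, hadef]
        have hbit : a.2 = false := by
          have h1 := hdec (t + 1)
          have h2 : (S (t + 1)).declared = ((S t).declared || a.2) := by
            show (pstep σ (sch0 t) (S t)).declared = _
            rw [hsch0def]
            simp only [pstep, hadef]
          rw [h2, hdec t, Bool.false_or] at h1
          exact h1
        have hwt : a.1 = W t := by
          rw [hWdef]
          simp only
          rw [hroomsS, Function.update_self]
        -- components of the modified run
        have hrooms : (prun σ sch2 init2 (t + 1)).rooms =
            Function.update (prun σ sch2 init2 t).rooms (rho t) a.1 := by
          show (pstep σ (sch2 t) (prun σ sch2 init2 t)).rooms = _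
          rw [hsch2def]
          simp only [pstep]
          rw [ihh, ihc, ← hadef]
        have hhist : (prun σ sch2 init2 (t + 1)).hist = (S (t + 1)).hist := by
          show (pstep σ (sch2 t) (prun σ sch2 init2 t)).hist = _
          rw [hsch2def]
          simp only [pstep]
          rw [ihh, ihc, ← hadef, hhistS]
        have hdecl : (prun σ sch2 init2 (t + 1)).declared = false := by
          show (pstep σ (sch2 t) (prun σ sch2 init2 t)).declared = false
          rw [hsch2def]
          simp only [pstep]
          rw [ihh, ihc, ← hadef, ihd, hbit]
          rfl
        have hW' : (S (t + 1)).rooms room0 = a.1 := by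
          rw [hroomsS, Function.update_self]
        rcases hstep t with ⟨hlt, hbeq⟩ | ⟨heq, hbeq⟩
        · have hrho : rho (t + 1) = rho t := by
            rw [hrhodef]; apply Fin.ext; simp only; rw [hbeq]
          refine ⟨hhist, hdecl, ?_, ?_⟩
          · rw [hrho, hrooms, Function.update_self, hW']
          · intro j hj
            rw [hrho] at hj
            rw [hrooms, Function.update_of_ne hj]
            exact iho j hj
        · have hWw : W t = w := by rw [heq]; exact hTw (blk t)
          have haw : a.1 = w := by rw [hwt]; exact hWw
          have hrhone : rho (t + 1) ≠ rho t := by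
            rw [hrhodef]
            intro hcon
            have hval : blk (t + 1) % r = blk t % r := congrArg Fin.val hcon
            rw [hbeq] at hval
            have hdvd : r ∣ (blk t + 1) - blk t :=
              (Nat.modEq_iff_dvd' (Nat.le_succ _)).1 hval.symm
            have : r ∣ 1 := by simpa using hdvd
            have := Nat.le_of_dvd one_pos this
            omega
          refine ⟨hhist, hdecl, ?_, ?_⟩
          · rw [hrooms, Function.update_of_ne hrhone, iho _ hrhone, hW', haw]
          · intro j hj
            by_cases hjt : j = rho t
            · rw [hrooms, hjt, Function.update_self, haw]
            · rw [hrooms, Function.update_of_ne hjt]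
              exact iho j hjt
    refine ⟨init2, sch2, ?_, Or.inr (fun t => (key t).2.1)⟩
    -- validity of sch2
    intro p j
    apply Set.infinite_of_forall_exists_gt
    intro N
    have hrN : 2 * (N + 1) ≤ r * (N + 1) := Nat.mul_le_mul_right _ hr
    set i := j.val + r * (N + 1) with hi
    have hi1 : 1 ≤ i := by omega
    set b := T (i - 1) + 1 with hb
    have hdm : n * (b / n) + b % n = b := Nat.div_add_mod b n
    have hmltn : b % n < n := Nat.mod_lt b hn
    have hmul : n * (b / n + 1) = n * (b / n) + n := by ring
    set tt := n * (b / n + 1) + p.val with htt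
    have hmod : tt % n = p.val := by
      rw [htt, Nat.mul_add_mod, Nat.mod_eq_of_lt p.isLt]
    have hgap := hTgap (i - 1)
    have hTi : T (i - 1 + 1) = T i := by rw [Nat.sub_add_cancel hi1]
    have hp := p.isLt
    have hlow : T (i - 1) < tt := by omega
    have hhigh : tt ≤ T i := by omega
    have hblkt : blk tt = i := by
      refine le_antisymm (hblk_le _ _ hhigh) ?_
      by_contra hcon
      push_neg at hcon
      have h5 : blk tt ≤ i - 1 := by omega
      have h6 := le_trans (hblk_mem tt) (hTmono.monotone h5)
      omega
    have hNi := hTge (i - 1)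
    refine ⟨tt, ?_, ?_⟩
    · show sch2 tt = (p, j)
      rw [hsch2def]
      refine Prod.ext ?_ ?_
      · apply Fin.ext; exact hmod
      · rw [hrhodef]; apply Fin.ext
        simp only
        rw [hblkt, hi, Nat.add_mul_mod_self_left, Nat.mod_eq_of_lt j.isLt]
    · omega
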